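/- Let T and S be square-integrable random vectors in ℝ^d on a common probability space (T the true Bayesian score and S the learned score). Assume F_B = E[T Tᵀ] is positive definite. Let L = E‖S − T‖₂², sRE_B = L/tr(F_B), and d_B = intdim(F_B). If d_B·sRE_B ≤ 0.16, then ‖E[S Sᵀ] − F_B‖₂ / ‖F_B‖₂ ≤ 2.4·√(d_B·sRE_B). -/

import Mathlib

set_option maxHeartbeats 1000000

open MeasureTheory

/-- Spectral norm (largest singular value) of a real square matrix. -/
noncomputable def specNorm {d : ℕ} (A : Matrix (Fin d) (Fin d) ℝ) : ℝ :=
  ‖LinearMap.toContinuousLinearMap (Matrix.toEuclideanLin A)‖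

/-- Matrix of second moments `E[X Xᵀ]` of a random vector `X`. -/
noncomputable def secondMoment {Ω : Type*} [MeasurableSpace Ω] (μ : Measure Ω) {d : ℕ}
    (X : Ω → EuclideanSpace ℝ (Fin d)) : Matrix (Fin d) (Fin d) ℝ :=
  Matrix.of fun i j => ∫ ω, X ω i * X ω j ∂μ

/-- Intrinsic dimension `tr(A)/‖A‖₂` of a matrix. -/
noncomputable def intdim {d : ℕ} (A : Matrix (Fin d) (Fin d) ℝ) : ℝ :=
  A.trace / specNorm A

section Helpers

variable {Ω : Type*} [MeasurableSpace Ω] (μ : Measure Ω)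

private lemma intMul {f g : Ω → ℝ} (hf : MemLp f 2 μ) (hg : MemLp g 2 μ) :
    Integrable (fun ω => f ω * g ω) μ := by
  have h := L2.integrable_inner (𝕜 := ℝ) (hf.toLp f) (hg.toLp g)
  refine h.congr ?_
  filter_upwards [hf.coeFn_toLp, hg.coeFn_toLp] with ω h1 h2
  simp [h1, h2, RCLike.inner_apply]; ring

private lemma csInt {f g : Ω → ℝ} (hf : MemLp f 2 μ) (hg : MemLp g 2 μ) :
    |∫ ω, f ω * g ω ∂μ| ≤
      Real.sqrt (∫ ω, f ω ^ 2 ∂μ) * Real.sqrt (∫ ω, g ω ^ 2 ∂μ) := by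
  set F := hf.toLp f
  set G := hg.toLp g
  have hFG : (inner ℝ F G : ℝ) = ∫ ω, f ω * g ω ∂μ := by
    rw [L2.inner_def]
    refine integral_congr_ae ?_
    filter_upwards [hf.coeFn_toLp, hg.coeFn_toLp] with ω h1 h2
    simp [F, G, h1, h2, RCLike.inner_apply]; ring
  have hFn : ‖F‖ = Real.sqrt (∫ ω, f ω ^ 2 ∂μ) := by
    have h2 : (inner ℝ F F : ℝ) = ∫ ω, f ω ^ 2 ∂μ := by
      rw [L2.inner_def]
      refine integral_congr_ae ?_
      filter_upwards [hf.coeFn_toLp] with ω h1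
      simp [F, h1, RCLike.inner_apply, sq]
    rw [← h2, real_inner_self_eq_norm_sq, Real.sqrt_sq (norm_nonneg _)]
  have hGn : ‖G‖ = Real.sqrt (∫ ω, g ω ^ 2 ∂μ) := by
    have h2 : (inner ℝ G G : ℝ) = ∫ ω, g ω ^ 2 ∂μ := by
      rw [L2.inner_def]
      refine integral_congr_ae ?_
      filter_upwards [hg.coeFn_toLp] with ω h1
      simp [G, h1, RCLike.inner_apply, sq]
    rw [← h2, real_inner_self_eq_norm_sq, Real.sqrt_sq (norm_nonneg _)]
  rw [← hFG, ← hFn, ← hGn]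
  exact abs_real_inner_le_norm F G

private lemma bilin {d : ℕ} {X : Ω → EuclideanSpace ℝ (Fin d)} (hX : MemLp X 2 μ)
    (w v : EuclideanSpace ℝ (Fin d)) :
    (inner ℝ w (Matrix.toEuclideanLin (secondMoment μ X) v) : ℝ) =
      ∫ ω, (inner ℝ w (X ω) : ℝ) * (inner ℝ v (X ω) : ℝ) ∂μ := by
  have hXi : ∀ i, MemLp (fun ω => X ω i) 2 μ := by
    intro i
    have := hX.const_inner (𝕜 := ℝ) (EuclideanSpace.single i (1 : ℝ))
    simpa [EuclideanSpace.inner_single_left] using this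
  have hint : ∀ i j : Fin d, Integrable (fun ω => (w i * X ω i) * (v j * X ω j)) μ :=
    fun i j => intMul μ ((hXi i).const_mul _) ((hXi j).const_mul _)
  have hR : (∫ ω, (inner ℝ w (X ω) : ℝ) * (inner ℝ v (X ω) : ℝ) ∂μ)
      = ∑ i, ∑ j, ∫ ω, (w i * X ω i) * (v j * X ω j) ∂μ := by
    have hpt : ∀ ω, (inner ℝ w (X ω) : ℝ) * (inner ℝ v (X ω) : ℝ)
        = ∑ i, ∑ j, (w i * X ω i) * (v j * X ω j) := by
      intro ω
      rw [PiLp.inner_apply, PiLp.inner_apply, Finset.sum_mul_sum]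
      simp [RCLike.inner_apply]
      exact Finset.sum_congr rfl fun i _ => Finset.sum_congr rfl fun j _ => by ring
    simp_rw [hpt]
    rw [integral_finset_sum _ (fun i _ => integrable_finset_sum _ (fun j _ => hint i j))]
    exact Finset.sum_congr rfl fun i _ => integral_finset_sum _ fun j _ => hint i j
  rw [hR, PiLp.inner_apply]
  have happ : ∀ i, (Matrix.toEuclideanLin (secondMoment μ X) v) i
      = ∑ j, (∫ ω, X ω i * X ω j ∂μ) * v j := by
    intro i
    rw [Matrix.toEuclideanLin_apply]
    simp [Matrix.mulVec, dotProduct, secondMoment]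
  refine Finset.sum_congr rfl fun i _ => ?_
  rw [happ, RCLike.inner_apply]
  rw [mul_comm, Finset.mul_sum]
  refine (Finset.sum_congr rfl fun j _ => ?_).symm
  have hpt2 : ∀ ω, (w i * X ω i) * (v j * X ω j) = (w i * v j) * (X ω i * X ω j) := by
    intro ω; ring
  simp_rw [hpt2]
  rw [integral_const_mul]
  simp; ring

end Helpers

/-- approximation error of the learned Bayesian FIM (Posterior Approach). -/
theorem lbcrb_approximation_error_posterior
    {Ω : Type*} [MeasurableSpace Ω] (μ : Measure Ω) [IsProbabilityMeasure μ]
    {d : ℕ} (T S : Ω → EuclideanSpace ℝ (Fin d))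
    (hT : MemLp T 2 μ) (hS : MemLp S 2 μ)
    (FB : Matrix (Fin d) (Fin d) ℝ) (hFB : FB = secondMoment μ T) (hFBpos : FB.PosDef)
    (L sREB dB : ℝ)
    (hL : L = ∫ ω, ‖S ω - T ω‖ ^ 2 ∂μ)
    (hsRE : sREB = L / FB.trace)
    (hdB : dB = intdim FB)
    (hsmall : dB * sREB ≤ 0.16) :
    specNorm (secondMoment μ S - FB) / specNorm FB ≤ 2.4 * Real.sqrt (dB * sREB) := by
  have hRHS : 0 ≤ 2.4 * Real.sqrt (dB * sREB) := by positivity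
  rcases Nat.eq_zero_or_pos d with hd | hd
  · subst hd
    have hzero : specNorm (secondMoment μ S - FB) = 0 := by
      have hv : ∀ u : EuclideanSpace ℝ (Fin 0), u = 0 := fun u => by ext i; exact i.elim0
      refine le_antisymm ?_ (norm_nonneg _)
      refine ContinuousLinearMap.opNorm_le_bound _ le_rfl fun u => ?_
      rw [hv u]; simp
    rw [hzero, zero_div]
    exact hRHS
  -- main case
  have hLnn : 0 ≤ L := hL ▸ integral_nonneg fun ω => by positivity
  set nF := specNorm FB with hnF
  -- positivity of nF and trace
  have hdiag : ∀ i : Fin d, 0 < FB i i := by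
    intro i
    have hx : (Pi.single i 1 : Fin d → ℝ) ≠ 0 := by
      intro h
      have := congrFun h i
      simp at this
    have := hFBpos.dotProduct_mulVec_pos hx
    simpa [dotProduct, Matrix.mulVec, Pi.single_apply] using this
  have htr : 0 < FB.trace := by
    rw [Matrix.trace]
    exact Finset.sum_pos (fun i _ => hdiag i) (by simp [Finset.univ_nonempty_iff, Fin.pos_iff_nonempty.mp hd])
  have hnFpos : 0 < nF := by
    have i0 : Fin d := ⟨0, hd⟩
    have hx : (Pi.single i0 1 : Fin d → ℝ) ≠ 0 := by
      intro h; have := congrFun h i0; simp at this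
    have hpd := hFBpos.dotProduct_mulVec_pos hx
    have hmv : FB.mulVec (Pi.single i0 1) ≠ 0 := by
      intro h; rw [h] at hpd; simp [dotProduct] at hpd
    have hne : LinearMap.toContinuousLinearMap (Matrix.toEuclideanLin FB) ≠ 0 := by
      intro h
      apply hmv
      have := congrArg (fun f : EuclideanSpace ℝ (Fin d) →L[ℝ] EuclideanSpace ℝ (Fin d) =>
        f ((WithLp.equiv 2 (Fin d → ℝ)).symm (Pi.single i0 1))) h
      simp only [ContinuousLinearMap.zero_apply] at this
      have h2 : Matrix.toEuclideanLin FB ((WithLp.equiv 2 (Fin d → ℝ)).symm (Pi.single i0 1)) = 0 := this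
      rw [Matrix.toEuclideanLin_apply] at h2
      funext j
      have := congrFun (congrArg (WithLp.equiv 2 (Fin d → ℝ)) h2) j
      simpa using this
    exact norm_pos_iff.mpr hne
  -- x = L / nF
  have hx : dB * sREB = L / nF := by
    rw [hdB, hsRE, intdim, ← hnF]
    field_simp
  -- score functions
  set D : Ω → EuclideanSpace ℝ (Fin d) := fun ω => S ω - T ω with hD
  have hDm : MemLp D 2 μ := hS.sub hT
  have hTv : ∀ v : EuclideanSpace ℝ (Fin d), MemLp (fun ω => (inner ℝ v (T ω) : ℝ)) 2 μ :=
    fun v => hT.const_inner v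
  have hSv : ∀ v : EuclideanSpace ℝ (Fin d), MemLp (fun ω => (inner ℝ v (S ω) : ℝ)) 2 μ :=
    fun v => hS.const_inner v
  have hDv : ∀ v : EuclideanSpace ℝ (Fin d), MemLp (fun ω => (inner ℝ v (D ω) : ℝ)) 2 μ :=
    fun v => hDm.const_inner v
  set A : EuclideanSpace ℝ (Fin d) → ℝ := fun v => ∫ ω, (inner ℝ v (T ω) : ℝ) ^ 2 ∂μ with hAdef
  set B : EuclideanSpace ℝ (Fin d) → ℝ := fun v => ∫ ω, (inner ℝ v (D ω) : ℝ) ^ 2 ∂μ with hBdef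
  set Cc : EuclideanSpace ℝ (Fin d) → ℝ := fun v => ∫ ω, (inner ℝ v (S ω) : ℝ) ^ 2 ∂μ with hCdef
  have hAnn : ∀ v, 0 ≤ A v := fun v => integral_nonneg fun ω => sq_nonneg _
  have hBnn : ∀ v, 0 ≤ B v := fun v => integral_nonneg fun ω => sq_nonneg _
  have hCnn : ∀ v, 0 ≤ Cc v := fun v => integral_nonneg fun ω => sq_nonneg _
  set FL := LinearMap.toContinuousLinearMap (Matrix.toEuclideanLin FB) with hFL
  -- A v ≤ nF ‖v‖²
  have hA : ∀ v, A v ≤ nF * ‖v‖ ^ 2 := by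
    intro v
    have h1 : A v = (inner ℝ v (FL v) : ℝ) := by
      rw [hFL, hFB]
      have hb := bilin μ hT v v
      simp only [LinearMap.coe_toContinuousLinearMap']
      rw [hb]
      refine (integral_congr_ae (Filter.Eventually.of_forall fun ω => ?_)).symm
      ring
    rw [h1]
    calc (inner ℝ v (FL v) : ℝ) ≤ ‖v‖ * ‖FL v‖ := real_inner_le_norm _ _
      _ ≤ ‖v‖ * (nF * ‖v‖) := by
          refine mul_le_mul_of_nonneg_left ?_ (norm_nonneg _)
          exact FL.le_opNorm v
      _ = nF * ‖v‖ ^ 2 := by ring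
  -- B v ≤ L ‖v‖²
  have hB : ∀ v, B v ≤ L * ‖v‖ ^ 2 := by
    intro v
    have hint1 : Integrable (fun ω => (inner ℝ v (D ω) : ℝ) ^ 2) μ := (hDv v).integrable_sq
    have hint2 : Integrable (fun ω => ‖v‖ ^ 2 * ‖D ω‖ ^ 2) μ := by
      exact (hDm.norm.integrable_sq).const_mul _
    have := integral_mono hint1 hint2 (fun ω => by
      have h1 : |(inner ℝ v (D ω) : ℝ)| ≤ ‖v‖ * ‖D ω‖ := abs_real_inner_le_norm _ _
      calc (inner ℝ v (D ω) : ℝ) ^ 2 = |(inner ℝ v (D ω) : ℝ)| ^ 2 := (sq_abs _).symm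
        _ ≤ (‖v‖ * ‖D ω‖) ^ 2 := by
            exact pow_le_pow_left₀ (abs_nonneg _) h1 2
        _ = ‖v‖ ^ 2 * ‖D ω‖ ^ 2 := by ring)
    calc B v ≤ ∫ ω, ‖v‖ ^ 2 * ‖D ω‖ ^ 2 ∂μ := this
      _ = ‖v‖ ^ 2 * L := by rw [integral_const_mul, hL]
      _ = L * ‖v‖ ^ 2 := by ring
  -- sqrt bounds
  have hsA : ∀ v, Real.sqrt (A v) ≤ Real.sqrt nF * ‖v‖ := by
    intro v
    calc Real.sqrt (A v) ≤ Real.sqrt (nF * ‖v‖ ^ 2) := Real.sqrt_le_sqrt (hA v)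
      _ = Real.sqrt nF * ‖v‖ := by
          rw [Real.sqrt_mul hnFpos.le, Real.sqrt_sq (norm_nonneg _)]
  have hsB : ∀ v, Real.sqrt (B v) ≤ Real.sqrt L * ‖v‖ := by
    intro v
    calc Real.sqrt (B v) ≤ Real.sqrt (L * ‖v‖ ^ 2) := Real.sqrt_le_sqrt (hB v)
      _ = Real.sqrt L * ‖v‖ := by
          rw [Real.sqrt_mul hLnn, Real.sqrt_sq (norm_nonneg _)]
  -- √(Cc v) ≤ √(A v) + √(B v)
  have hsC : ∀ v, Real.sqrt (Cc v) ≤ Real.sqrt (A v) + Real.sqrt (B v) := by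
    intro v
    have hintA : Integrable (fun ω => (inner ℝ v (T ω) : ℝ) ^ 2) μ := (hTv v).integrable_sq
    have hintB : Integrable (fun ω => (inner ℝ v (D ω) : ℝ) ^ 2) μ := (hDv v).integrable_sq
    have hintAB : Integrable (fun ω => (inner ℝ v (T ω) : ℝ) * (inner ℝ v (D ω) : ℝ)) μ :=
      intMul μ (hTv v) (hDv v)
    have hcross : |∫ ω, (inner ℝ v (T ω) : ℝ) * (inner ℝ v (D ω) : ℝ) ∂μ|
        ≤ Real.sqrt (A v) * Real.sqrt (B v) := csInt μ (hTv v) (hDv v)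
    have hCeq : Cc v = A v + 2 * (∫ ω, (inner ℝ v (T ω) : ℝ) * (inner ℝ v (D ω) : ℝ) ∂μ) + B v := by
      have hpt : ∀ ω, (inner ℝ v (S ω) : ℝ) ^ 2
          = (inner ℝ v (T ω) : ℝ) ^ 2 + 2 * ((inner ℝ v (T ω) : ℝ) * (inner ℝ v (D ω) : ℝ))
            + (inner ℝ v (D ω) : ℝ) ^ 2 := by
        intro ω
        have hsum : (inner ℝ v (S ω) : ℝ) = (inner ℝ v (T ω) : ℝ) + (inner ℝ v (D ω) : ℝ) := by
          rw [hD]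
          simp only [inner_sub_right]
          ring
        rw [hsum]; ring
      have hint2' : Integrable (fun ω => 2 * ((inner ℝ v (T ω) : ℝ) * (inner ℝ v (D ω) : ℝ))) μ :=
        hintAB.const_mul 2
      have hint12 : Integrable (fun ω => (inner ℝ v (T ω) : ℝ) ^ 2
          + 2 * ((inner ℝ v (T ω) : ℝ) * (inner ℝ v (D ω) : ℝ))) μ := hintA.add hint2'
      rw [hCdef]
      simp only
      rw [integral_congr_ae (Filter.Eventually.of_forall hpt)]
      rw [integral_add hint12 hintB, integral_add hintA hint2', integral_const_mul]
    have hC2 : Cc v ≤ (Real.sqrt (A v) + Real.sqrt (B v)) ^ 2 := by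
      have h1 : A v = Real.sqrt (A v) ^ 2 := (Real.sq_sqrt (hAnn v)).symm
      have h2 : B v = Real.sqrt (B v) ^ 2 := (Real.sq_sqrt (hBnn v)).symm
      have h3 : (∫ ω, (inner ℝ v (T ω) : ℝ) * (inner ℝ v (D ω) : ℝ) ∂μ)
          ≤ Real.sqrt (A v) * Real.sqrt (B v) := le_trans (le_abs_self _) hcross
      nlinarith [hCeq]
    calc Real.sqrt (Cc v) ≤ Real.sqrt ((Real.sqrt (A v) + Real.sqrt (B v)) ^ 2) :=
          Real.sqrt_le_sqrt hC2
      _ = Real.sqrt (A v) + Real.sqrt (B v) := by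
          rw [Real.sqrt_sq (by positivity)]
  -- the error operator
  set EL := LinearMap.toContinuousLinearMap (Matrix.toEuclideanLin (secondMoment μ S - FB))
    with hEL
  set C : ℝ := 2 * Real.sqrt L * Real.sqrt nF + L with hCc
  have hCnn' : 0 ≤ C := by positivity
  have hkey : ∀ w v : EuclideanSpace ℝ (Fin d),
      |(inner ℝ w (EL v) : ℝ)| ≤ C * (‖w‖ * ‖v‖) := by
    intro w v
    have hsplit : (inner ℝ w (EL v) : ℝ)
        = (∫ ω, (inner ℝ w (D ω) : ℝ) * (inner ℝ v (S ω) : ℝ) ∂μ)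
          + ∫ ω, (inner ℝ w (T ω) : ℝ) * (inner ℝ v (D ω) : ℝ) ∂μ := by
      have h1 : (inner ℝ w (EL v) : ℝ)
          = (inner ℝ w (Matrix.toEuclideanLin (secondMoment μ S) v) : ℝ)
            - (inner ℝ w (Matrix.toEuclideanLin FB v) : ℝ) := by
        rw [hEL]
        simp only [LinearMap.coe_toContinuousLinearMap', map_sub,
          ContinuousLinearMap.coe_sub', Pi.sub_apply, LinearMap.sub_apply, inner_sub_right]
      rw [h1, bilin μ hS w v, hFB, bilin μ hT w v]
      have hi1 : Integrable (fun ω => (inner ℝ w (D ω) : ℝ) * (inner ℝ v (S ω) : ℝ)) μ :=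
        intMul μ (hDv w) (hSv v)
      have hi2 : Integrable (fun ω => (inner ℝ w (T ω) : ℝ) * (inner ℝ v (D ω) : ℝ)) μ :=
        intMul μ (hTv w) (hDv v)
      rw [← integral_add hi1 hi2, ← integral_sub (intMul μ (hSv w) (hSv v)) (intMul μ (hTv w) (hTv v))]
      refine integral_congr_ae (Filter.Eventually.of_forall fun ω => ?_)
      have hw : (inner ℝ w (S ω) : ℝ) = (inner ℝ w (T ω) : ℝ) + (inner ℝ w (D ω) : ℝ) := by
        rw [hD]; simp only [inner_sub_right]; ring
      have hv : (inner ℝ v (S ω) : ℝ) = (inner ℝ v (T ω) : ℝ) + (inner ℝ v (D ω) : ℝ) := by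
        rw [hD]; simp only [inner_sub_right]; ring
      simp only
      rw [hw, hv]; ring
    have h1 : |∫ ω, (inner ℝ w (D ω) : ℝ) * (inner ℝ v (S ω) : ℝ) ∂μ|
        ≤ Real.sqrt (B w) * Real.sqrt (Cc v) := csInt μ (hDv w) (hSv v)
    have h2 : |∫ ω, (inner ℝ w (T ω) : ℝ) * (inner ℝ v (D ω) : ℝ) ∂μ|
        ≤ Real.sqrt (A w) * Real.sqrt (B v) := csInt μ (hTv w) (hDv v)
    have hL2 : Real.sqrt L * Real.sqrt L = L := Real.mul_self_sqrt hLnn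
    calc |(inner ℝ w (EL v) : ℝ)|
        ≤ Real.sqrt (B w) * Real.sqrt (Cc v) + Real.sqrt (A w) * Real.sqrt (B v) := by
          rw [hsplit]
          exact le_trans (abs_add_le _ _) (add_le_add h1 h2)
      _ ≤ (Real.sqrt L * ‖w‖) * (Real.sqrt (A v) + Real.sqrt (B v))
            + (Real.sqrt nF * ‖w‖) * (Real.sqrt L * ‖v‖) := by
          refine add_le_add ?_ ?_
          · exact mul_le_mul (hsB w) (hsC v) (Real.sqrt_nonneg _) (by positivity)
          · exact mul_le_mul (hsA w) (hsB v) (Real.sqrt_nonneg _) (by positivity)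
      _ ≤ (Real.sqrt L * ‖w‖) * (Real.sqrt nF * ‖v‖ + Real.sqrt L * ‖v‖)
            + (Real.sqrt nF * ‖w‖) * (Real.sqrt L * ‖v‖) := by
          refine add_le_add ?_ le_rfl
          refine mul_le_mul_of_nonneg_left (add_le_add (hsA v) (hsB v)) (by positivity)
      _ = C * (‖w‖ * ‖v‖) := by rw [hCc]; linear_combination (‖w‖ * ‖v‖) * hL2
  have hEnorm : specNorm (secondMoment μ S - FB) ≤ C := by
    refine ContinuousLinearMap.opNorm_le_bound _ hCnn' fun v => ?_
    rcases eq_or_lt_of_le (norm_nonneg (EL v)) with h0 | h0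
    · rw [← h0]; positivity
    · have := hkey (EL v) v
      rw [real_inner_self_eq_norm_sq] at this
      have h2 : ‖EL v‖ ^ 2 ≤ C * (‖EL v‖ * ‖v‖) := le_trans (le_abs_self _) this
      nlinarith
  -- final arithmetic
  rw [hx] at hsmall ⊢
  have hLle : L ≤ 0.16 * nF := by
    have := (div_le_iff₀ hnFpos).mp hsmall
    linarith
  have hsL : Real.sqrt L ≤ 0.4 * Real.sqrt nF := by
    calc Real.sqrt L ≤ Real.sqrt (0.16 * nF) := Real.sqrt_le_sqrt hLle
      _ = 0.4 * Real.sqrt nF := by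
          rw [show (0.16 : ℝ) = 0.4 ^ 2 by norm_num, Real.sqrt_mul (by positivity),
            Real.sqrt_sq (by norm_num)]
  have hsqrtdiv : Real.sqrt (L / nF) = Real.sqrt L / Real.sqrt nF := Real.sqrt_div' L hnFpos.le ▸ by
    rw [Real.sqrt_div hLnn]
  rw [div_le_iff₀ hnFpos]
  have hnFsq : Real.sqrt nF * Real.sqrt nF = nF := Real.mul_self_sqrt hnFpos.le
  have hLsq : Real.sqrt L * Real.sqrt L = L := Real.mul_self_sqrt hLnn
  have hrhs : 2.4 * Real.sqrt (L / nF) * nF = 2.4 * Real.sqrt L * Real.sqrt nF := by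
    rw [hsqrtdiv]
    field_simp
    nlinarith [hnFsq, Real.sqrt_nonneg nF]
  rw [hrhs]
  refine le_trans hEnorm ?_
  rw [hCc]
  nlinarith [hsL, Real.sqrt_nonneg L, Real.sqrt_nonneg nF, hLsq,
    mul_le_mul_of_nonneg_left hsL (Real.sqrt_nonneg L)]
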